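/- Continuity of the entropy of entanglement: the function H is continuous on the set of covariance matrices, i.e. on the set of real symmetric 2n×2n matrices γ such that γ − iσ is positive semidefinite as a complex Hermitian matrix. -/

import Mathlib

open Matrix
open scoped ComplexOrder

/-- The standard symplectic form σ = [[0, Iₙ], [−Iₙ, 0]] on ℝ^{2n},
indexed by `Fin n ⊕ Fin n`. -/
def symplJ (n : ℕ) : Matrix (Fin n ⊕ Fin n) (Fin n ⊕ Fin n) ℝ :=
  Matrix.fromBlocks 0 1 (-1) 0

/-- `S ∈ Sp(2n)`: a real `2n × 2n` matrix with `Sᵀ σ S = σ`. -/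
def IsSymplectic {n : ℕ} (S : Matrix (Fin n ⊕ Fin n) (Fin n ⊕ Fin n) ℝ) : Prop :=
  Sᵀ * symplJ n * S = symplJ n

/-- The block-diagonal matrix `diag(D, D)` built from the diagonal entries `d`. -/
def Dtilde {n : ℕ} (d : Fin n → ℝ) : Matrix (Fin n ⊕ Fin n) (Fin n ⊕ Fin n) ℝ :=
  Matrix.fromBlocks (Matrix.diagonal d) 0 0 (Matrix.diagonal d)

/-- `g(x) = x·log x` (with `g(0) = 0`, since `Real.log 0 = 0`). -/
noncomputable def entg (x : ℝ) : ℝ := x * Real.log x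

lemma symplJ_transpose (n : ℕ) : (symplJ n)ᵀ = -symplJ n := by
  simp [symplJ, Matrix.fromBlocks_transpose, Matrix.fromBlocks_neg]

lemma symplJ_mul_self (n : ℕ) : symplJ n * symplJ n = -1 := by
  simp [symplJ, Matrix.fromBlocks_multiply, ← Matrix.fromBlocks_one, Matrix.fromBlocks_neg]

lemma symplJ_mul_transpose (n : ℕ) : symplJ n * (symplJ n)ᵀ = 1 := by
  rw [symplJ_transpose, Matrix.mul_neg, symplJ_mul_self]; simp

lemma symplJ_transpose_mul (n : ℕ) : (symplJ n)ᵀ * symplJ n = 1 := by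
  rw [symplJ_transpose, Matrix.neg_mul, symplJ_mul_self]; simp

lemma symplJ_det_sq (n : ℕ) : (symplJ n).det ^ 2 = 1 := by
  have := congrArg Matrix.det (symplJ_mul_transpose n)
  rwa [Matrix.det_mul, Matrix.det_transpose, ← sq, Matrix.det_one] at this

section
variable {n : ℕ} {S γ : Matrix (Fin n ⊕ Fin n) (Fin n ⊕ Fin n) ℝ}

lemma IsSymplectic.det_ne_zero (hS : IsSymplectic S) : S.det ≠ 0 := by
  have h := congrArg Matrix.det hS
  rw [Matrix.det_mul, Matrix.det_mul, Matrix.det_transpose] at h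
  intro h0
  rw [h0] at h
  simp at h
  have := symplJ_det_sq n
  rw [← h] at this
  norm_num at this

lemma IsSymplectic.isUnit_det (hS : IsSymplectic S) : IsUnit S.det :=
  isUnit_iff_ne_zero.mpr hS.det_ne_zero

lemma IsSymplectic.mul_J_mul_transpose (hS : IsSymplectic S) :
    S * symplJ n * Sᵀ = symplJ n := by
  have hL : ((symplJ n)ᵀ * Sᵀ * symplJ n) * S = 1 := by
    calc ((symplJ n)ᵀ * Sᵀ * symplJ n) * S = (symplJ n)ᵀ * (Sᵀ * symplJ n * S) := by
          noncomm_ring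
      _ = 1 := by rw [hS, symplJ_transpose_mul]
  have hR : S * ((symplJ n)ᵀ * Sᵀ * symplJ n) = 1 := mul_eq_one_comm.mp hL
  have h2 : S * (symplJ n)ᵀ * Sᵀ * (symplJ n * (symplJ n)ᵀ) =
      (symplJ n)ᵀ := by
    calc S * (symplJ n)ᵀ * Sᵀ * (symplJ n * (symplJ n)ᵀ)
        = (S * ((symplJ n)ᵀ * Sᵀ * symplJ n)) * (symplJ n)ᵀ := by noncomm_ring
      _ = (symplJ n)ᵀ := by rw [hR, one_mul]
  rw [symplJ_mul_transpose, mul_one] at h2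
  have := congrArg (fun M => -M) h2
  simp only [symplJ_transpose] at h2 ⊢
  calc S * symplJ n * Sᵀ = -(S * (-(symplJ n)) * Sᵀ) := by noncomm_ring
    _ = symplJ n := by rw [h2]; simp

end

section
variable {n : ℕ} {S γ : Matrix (Fin n ⊕ Fin n) (Fin n ⊕ Fin n) ℝ} {d : Fin n → ℝ}

/-- `σ D̃ σ D̃ = diag(-D², -D²)`. -/
lemma symplJ_Dtilde_sq (n : ℕ) (d : Fin n → ℝ) :
    symplJ n * Dtilde d * (symplJ n * Dtilde d) =
      Matrix.fromBlocks (-(Matrix.diagonal fun k => d k ^ 2)) 0 0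
        (-(Matrix.diagonal fun k => d k ^ 2)) := by
  have h1 : symplJ n * Dtilde d =
      Matrix.fromBlocks 0 (Matrix.diagonal d) (-(Matrix.diagonal d)) 0 := by
    rw [symplJ, Dtilde, Matrix.fromBlocks_multiply]
    congr 1 <;> simp
  rw [h1, Matrix.fromBlocks_multiply]
  congr 1 <;> simp [Matrix.diagonal_mul_diagonal, ← sq]

lemma trace_fromBlocks' {m : Type*} [Fintype m] [DecidableEq m]
    (A B C D : Matrix m m ℝ) :
    (Matrix.fromBlocks A B C D).trace = A.trace + D.trace := by
  simp [Matrix.trace, Fintype.sum_sum_type, Matrix.diag, Matrix.fromBlocks]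

lemma conj_lemma (hS : IsSymplectic S) (hSD : Sᵀ * γ * S = Dtilde d) :
    symplJ n * γ * (symplJ n * γ) =
      S * (Matrix.fromBlocks (-(Matrix.diagonal fun k => d k ^ 2)) 0 0
        (-(Matrix.diagonal fun k => d k ^ 2))) * S⁻¹ := by
  have h2 : S * symplJ n * Sᵀ = symplJ n := hS.mul_J_mul_transpose
  have hcomm : symplJ n * γ * S = S * (symplJ n * Dtilde d) := by
    calc symplJ n * γ * S = (S * symplJ n * Sᵀ) * γ * S := by rw [h2]
      _ = S * symplJ n * (Sᵀ * γ * S) := by noncomm_ring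
      _ = S * (symplJ n * Dtilde d) := by rw [hSD]; noncomm_ring
  have hMS : symplJ n * γ * (symplJ n * γ) * S =
      S * (symplJ n * Dtilde d * (symplJ n * Dtilde d)) := by
    calc symplJ n * γ * (symplJ n * γ) * S
        = symplJ n * γ * (symplJ n * γ * S) := by noncomm_ring
      _ = symplJ n * γ * (S * (symplJ n * Dtilde d)) := by rw [hcomm]
      _ = (symplJ n * γ * S) * (symplJ n * Dtilde d) := by noncomm_ring
      _ = S * (symplJ n * Dtilde d) * (symplJ n * Dtilde d) := by rw [hcomm]
      _ = S * (symplJ n * Dtilde d * (symplJ n * Dtilde d)) := by noncomm_ring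
  conv_rhs => rw [← symplJ_Dtilde_sq n d, ← hMS, Matrix.mul_assoc,
    Matrix.mul_nonsing_inv S hS.isUnit_det, Matrix.mul_one]

lemma diag_shift (x : ℝ) (d : Fin n → ℝ) :
    ((Matrix.diagonal fun _ : Fin n => x) + -(Matrix.diagonal fun k => d k ^ 2))
      = Matrix.diagonal fun k => x - d k ^ 2 := by
  ext i j
  rcases eq_or_ne i j with rfl | h
  · simp [Matrix.diagonal_apply_eq]; ring
  · simp [Matrix.diagonal_apply_ne _ h]

/-- determinant identity -/
lemma det_identity (hS : IsSymplectic S) (hSD : Sᵀ * γ * S = Dtilde d) (x : ℝ) :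
    (x • (1 : Matrix (Fin n ⊕ Fin n) (Fin n ⊕ Fin n) ℝ)
      + symplJ n * γ * (symplJ n * γ)).det = (∏ k, (x - d k ^ 2)) ^ 2 := by
  have hM := conj_lemma hS hSD
  have h1 : S * (x • (1 : Matrix (Fin n ⊕ Fin n) (Fin n ⊕ Fin n) ℝ)) * S⁻¹ = x • 1 := by
    rw [Matrix.mul_smul, Matrix.smul_mul, Matrix.mul_one,
      Matrix.mul_nonsing_inv S hS.isUnit_det]
  rw [hM, ← h1, ← Matrix.add_mul, ← Matrix.mul_add, Matrix.det_mul, Matrix.det_mul,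
    Matrix.det_nonsing_inv]
  rw [mul_comm, ← mul_assoc, Ring.inverse_eq_inv, inv_mul_cancel₀ hS.det_ne_zero, one_mul]
  have hblock : x • (1 : Matrix (Fin n ⊕ Fin n) (Fin n ⊕ Fin n) ℝ)
      + Matrix.fromBlocks (-(Matrix.diagonal fun k => d k ^ 2)) 0 0
        (-(Matrix.diagonal fun k => d k ^ 2))
      = Matrix.fromBlocks (Matrix.diagonal fun k => x - d k ^ 2) 0 0
          (Matrix.diagonal fun k => x - d k ^ 2) := by
    rw [← Matrix.fromBlocks_one, Matrix.fromBlocks_smul, Matrix.fromBlocks_add,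
      Matrix.smul_one_eq_diagonal, diag_shift]
    congr 1 <;> simp
  rw [hblock, Matrix.det_fromBlocks_zero₂₁, Matrix.det_diagonal, sq]

/-- trace identity -/
lemma trace_identity (hS : IsSymplectic S) (hSD : Sᵀ * γ * S = Dtilde d) :
    (symplJ n * γ * (symplJ n * γ)).trace = -2 * ∑ k, d k ^ 2 := by
  have hM := conj_lemma hS hSD
  rw [hM, Matrix.trace_mul_cycle, Matrix.nonsing_inv_mul S hS.isUnit_det, Matrix.one_mul]
  rw [trace_fromBlocks', Matrix.trace_neg, Matrix.trace_diagonal]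
  ring

end


section cast
variable {m : Type*} [Fintype m]

lemma cast_quadform (A : Matrix m m ℝ) (a b : m → ℝ) :
    (fun i => ((a i : ℝ) : ℂ)) ⬝ᵥ (A.map (Complex.ofReal ·)) *ᵥ (fun i => ((b i : ℝ) : ℂ))
      = ((a ⬝ᵥ A *ᵥ b : ℝ) : ℂ) := by
  simp only [dotProduct, Matrix.mulVec, Matrix.map_apply]
  push_cast
  ring_nf

end cast

section expand
variable {m : Type*} [Fintype m]

lemma expand_quadform (P : Matrix m m ℝ) (u v : m → ℝ) :
    (star (fun i => ((u i : ℝ) : ℂ) + ((v i : ℝ) : ℂ) * Complex.I)) ⬝ᵥ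
      (P.map (Complex.ofReal ·)) *ᵥ (fun i => ((u i : ℝ) : ℂ) + ((v i : ℝ) : ℂ) * Complex.I)
    = ((u ⬝ᵥ P *ᵥ u : ℝ) : ℂ) + ((v ⬝ᵥ P *ᵥ v : ℝ) : ℂ)
      + (((u ⬝ᵥ P *ᵥ v : ℝ) : ℂ) - ((v ⬝ᵥ P *ᵥ u : ℝ) : ℂ)) * Complex.I := by
  have hz : (fun i => ((u i : ℝ) : ℂ) + ((v i : ℝ) : ℂ) * Complex.I)
      = (fun i => ((u i : ℝ) : ℂ)) + Complex.I • (fun i => ((v i : ℝ) : ℂ)) := by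
    funext i; simp [mul_comm]
  have hzbar : (star (fun i => ((u i : ℝ) : ℂ) + ((v i : ℝ) : ℂ) * Complex.I))
      = (fun i => ((u i : ℝ) : ℂ)) - Complex.I • (fun i => ((v i : ℝ) : ℂ)) := by
    funext i
    simp [Pi.star_apply, Complex.ext_iff]
  rw [hzbar, hz, Matrix.mulVec_add, Matrix.mulVec_smul, sub_dotProduct,
    dotProduct_add, dotProduct_add, smul_dotProduct,
    smul_dotProduct, dotProduct_smul, dotProduct_smul,
    cast_quadform, cast_quadform, cast_quadform, cast_quadform]
  simp only [smul_eq_mul]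
  have : Complex.I * Complex.I = -1 := Complex.I_mul_I
  ring_nf
  rw [Complex.I_sq]
  ring

end expand

section posdef
variable {n : ℕ} {γ : Matrix (Fin n ⊕ Fin n) (Fin n ⊕ Fin n) ℝ}

lemma quad_pos {A B C : ℝ} (hB : 0 < B) (h : ∀ t : ℝ, 0 ≤ A * t ^ 2 + C + 2 * t * B) :
    0 < C := by
  rcases le_or_gt A 0 with hA | hA
  · exfalso
    have hB' : (2 * B) ≠ 0 := by positivity
    set t : ℝ := -(1 + |C|) / (2 * B) with ht
    have h2 : 2 * t * B = -(1 + |C|) := by rw [ht]; field_simp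
    have h3 : A * t ^ 2 ≤ 0 := mul_nonpos_of_nonpos_of_nonneg hA (sq_nonneg t)
    have := h t
    rw [h2] at this
    have := le_abs_self C
    linarith
  · have hA' : A ≠ 0 := ne_of_gt hA
    have e1 : A * (-B / A) ^ 2 + C + 2 * (-B / A) * B = C - B ^ 2 / A := by
      field_simp
      ring
    have h1 := h (-B / A)
    rw [e1] at h1
    have h2 : 0 < B ^ 2 / A := div_pos (pow_pos hB 2) hA
    linarith

lemma covariance_posdef (hsym : γ.IsSymm)
    (hpsd : (γ.map (Complex.ofReal ·) -
      Complex.I • (symplJ n).map (Complex.ofReal ·)).PosSemidef) : γ.PosDef := by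
  -- symmetry gives: u ⬝ᵥ γ *ᵥ v = v ⬝ᵥ γ *ᵥ u
  have hsymm_form : ∀ u v : (Fin n ⊕ Fin n) → ℝ, u ⬝ᵥ γ *ᵥ v = v ⬝ᵥ γ *ᵥ u := by
    intro u v
    rw [Matrix.dotProduct_mulVec, ← Matrix.mulVec_transpose, hsym.eq,
      dotProduct_comm]
  have hskew_form : ∀ u : (Fin n ⊕ Fin n) → ℝ, u ⬝ᵥ symplJ n *ᵥ u = 0 := by
    intro u
    have h1 : u ⬝ᵥ symplJ n *ᵥ u = u ⬝ᵥ (symplJ n)ᵀ *ᵥ u := by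
      rw [Matrix.dotProduct_mulVec, ← Matrix.mulVec_transpose, dotProduct_comm]
    rw [symplJ_transpose] at h1
    simp only [Matrix.neg_mulVec, dotProduct_neg] at h1
    linarith
  -- the real quadratic inequality
  have hQ : ∀ u v : (Fin n ⊕ Fin n) → ℝ,
      0 ≤ u ⬝ᵥ γ *ᵥ u + v ⬝ᵥ γ *ᵥ v + 2 * (u ⬝ᵥ symplJ n *ᵥ v) := by
    intro u v
    set z : (Fin n ⊕ Fin n) → ℂ := fun i => ((u i : ℝ) : ℂ) + ((v i : ℝ) : ℂ) * Complex.I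
    have h0 := hpsd.dotProduct_mulVec_nonneg z
    have hT : star z ⬝ᵥ (γ.map (Complex.ofReal ·) -
        Complex.I • (symplJ n).map (Complex.ofReal ·)) *ᵥ z
        = ((u ⬝ᵥ γ *ᵥ u + v ⬝ᵥ γ *ᵥ v + 2 * (u ⬝ᵥ symplJ n *ᵥ v) : ℝ) : ℂ) := by
      rw [Matrix.sub_mulVec, dotProduct_sub, Matrix.smul_mulVec,
        dotProduct_smul]
      rw [show z = fun i => ((u i : ℝ) : ℂ) + ((v i : ℝ) : ℂ) * Complex.I from rfl]
      rw [expand_quadform, expand_quadform]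
      rw [hsymm_form u v, hskew_form u, hskew_form v]
      push_cast
      simp only [smul_eq_mul]
      have h2 : v ⬝ᵥ symplJ n *ᵥ u = -(u ⬝ᵥ symplJ n *ᵥ v) := by
        have h1 : v ⬝ᵥ symplJ n *ᵥ u = u ⬝ᵥ (symplJ n)ᵀ *ᵥ v := by
          rw [Matrix.dotProduct_mulVec, ← Matrix.mulVec_transpose, dotProduct_comm]
        rw [symplJ_transpose] at h1
        simp only [Matrix.neg_mulVec, dotProduct_neg] at h1
        linarith
      rw [h2]
      push_cast
      have : Complex.I * Complex.I = -1 := Complex.I_mul_I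
      ring_nf
      rw [Complex.I_sq]
      ring
    rw [hT] at h0
    exact Complex.zero_le_real.mp h0
  rw [Matrix.posDef_iff_dotProduct_mulVec]
  constructor
  · rw [Matrix.IsHermitian, Matrix.conjTranspose_eq_transpose_of_trivial]
    exact hsym.eq
  · intro x hx
    simp only [star_trivial]
    set w : (Fin n ⊕ Fin n) → ℝ := symplJ n *ᵥ x with hw
    have hwne : w ≠ 0 := by
      intro h0
      apply hx
      have : (symplJ n)ᵀ *ᵥ w = x := by
        rw [hw, Matrix.mulVec_mulVec, symplJ_transpose_mul, Matrix.one_mulVec]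
      rw [← this, h0, Matrix.mulVec_zero]
    have hwdot : 0 < w ⬝ᵥ w := by
      have := Matrix.dotProduct_self_star_pos_iff.mpr hwne
      simpa using this
    have hq : ∀ t : ℝ, 0 ≤ (w ⬝ᵥ γ *ᵥ w) * t ^ 2 + x ⬝ᵥ γ *ᵥ x + 2 * t * (w ⬝ᵥ w) := by
      intro t
      have := hQ (t • w) x
      have e1 : (t • w) ⬝ᵥ γ *ᵥ (t • w) = (w ⬝ᵥ γ *ᵥ w) * t ^ 2 := by
        rw [smul_dotProduct, Matrix.mulVec_smul, dotProduct_smul]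
        simp [smul_eq_mul]; ring
      have e2 : (t • w) ⬝ᵥ symplJ n *ᵥ x = t * (w ⬝ᵥ symplJ n *ᵥ x) := by
        rw [smul_dotProduct]; simp
      have e3 : w ⬝ᵥ symplJ n *ᵥ x = w ⬝ᵥ w := by
        rw [hw]
      rw [e1, e2, e3] at this
      linarith
    exact quad_pos hwdot hq

end posdef

open Polynomial in

lemma sum_transfer {n : ℕ} (e d : Fin n → ℝ) (he : ∀ k, 0 ≤ e k) (hd : ∀ k, 0 ≤ d k)
    (h : ∀ x : ℝ, (∏ k, (x - e k ^ 2)) ^ 2 = (∏ k, (x - d k ^ 2)) ^ 2) :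
    ∀ g : ℝ → ℝ, ∑ k, g (e k) = ∑ k, g (d k) := by
  set s : Multiset ℝ := Finset.univ.val.map (fun k => e k ^ 2) with hs
  set t : Multiset ℝ := Finset.univ.val.map (fun k => d k ^ 2) with ht
  set P : ℝ[X] := (s.map fun a => X - C a).prod with hP
  set Q : ℝ[X] := (t.map fun a => X - C a).prod with hQ
  have hPe : ∀ x : ℝ, P.eval x = ∏ k, (x - e k ^ 2) := by
    intro x
    rw [hP, hs, Multiset.map_map, ← Finset.prod_eq_multiset_prod, Polynomial.eval_prod]
    simp
  have hQe : ∀ x : ℝ, Q.eval x = ∏ k, (x - d k ^ 2) := by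
    intro x
    rw [hQ, ht, Multiset.map_map, ← Finset.prod_eq_multiset_prod, Polynomial.eval_prod]
    simp
  have hPQ : P ^ 2 = Q ^ 2 := by
    apply Polynomial.funext
    intro x
    rw [Polynomial.eval_pow, Polynomial.eval_pow, hPe, hQe]
    exact h x
  have hroots : (2 : ℕ) • s = (2 : ℕ) • t := by
    have := congrArg Polynomial.roots hPQ
    rwa [Polynomial.roots_pow, Polynomial.roots_pow, hP, hQ,
      Polynomial.roots_multiset_prod_X_sub_C, Polynomial.roots_multiset_prod_X_sub_C] at this
  have hst : s = t := by
    ext a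
    have := congrArg (Multiset.count a) hroots
    rw [Multiset.count_nsmul, Multiset.count_nsmul] at this
    omega
  have he1 : Multiset.map (Real.sqrt ∘ fun k => e k ^ 2) Finset.univ.val
      = Multiset.map e Finset.univ.val :=
    Multiset.map_congr rfl (fun k _ => by simp [Function.comp, Real.sqrt_sq (he k)])
  have hd1 : Multiset.map (Real.sqrt ∘ fun k => d k ^ 2) Finset.univ.val
      = Multiset.map d Finset.univ.val :=
    Multiset.map_congr rfl (fun k _ => by simp [Function.comp, Real.sqrt_sq (hd k)])
  have hmap : Finset.univ.val.map e = Finset.univ.val.map d := by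
    have h1 := congrArg (Multiset.map Real.sqrt) hst
    rw [hs, ht, Multiset.map_map, Multiset.map_map, he1, hd1] at h1
    exact h1
  intro g
  calc ∑ k, g (e k) = ((Multiset.map e Finset.univ.val).map g).sum := by
        rw [Multiset.map_map, Finset.sum_eq_multiset_sum]; rfl
    _ = ((Multiset.map d Finset.univ.val).map g).sum := by rw [hmap]
    _ = ∑ k, g (d k) := by rw [Multiset.map_map, Finset.sum_eq_multiset_sum]; rfl

/-- **Continuity of the entropy of entanglement.**  Let `f` assign to each
positive definite `γ` its tuple of symplectic eigenvalues (decreasing order, as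
furnished by Williamson's theorem).  Then the entropy of entanglement
`H(γ) = Σₖ [g((dₖ+1)/2) − g((dₖ−1)/2)]` is continuous on the set of covariance
matrices, i.e. on the set of real symmetric `γ` such that `γ − iσ` is positive
semidefinite as a complex Hermitian matrix. -/
theorem entanglement_entropy_continuous (n : ℕ)
    (f : Matrix (Fin n ⊕ Fin n) (Fin n ⊕ Fin n) ℝ → (Fin n → ℝ))
    (hf : ∀ γ : Matrix (Fin n ⊕ Fin n) (Fin n ⊕ Fin n) ℝ, γ.PosDef →
      ∃ S, IsSymplectic S ∧ (∀ i, 0 < f γ i) ∧ Antitone (f γ) ∧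
        Sᵀ * γ * S = Dtilde (f γ)) :
    ContinuousOn
      (fun γ => ∑ k : Fin n, (entg ((f γ k + 1) / 2) - entg ((f γ k - 1) / 2)))
      {γ : Matrix (Fin n ⊕ Fin n) (Fin n ⊕ Fin n) ℝ | γ.IsSymm ∧
        (γ.map (Complex.ofReal ·) -
          Complex.I • (symplJ n).map (Complex.ofReal ·)).PosSemidef} := by
  classical
  have hfacts : ∀ γ : Matrix (Fin n ⊕ Fin n) (Fin n ⊕ Fin n) ℝ,
      γ.IsSymm →
      (γ.map (Complex.ofReal ·) -
        Complex.I • (symplJ n).map (Complex.ofReal ·)).PosSemidef →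
      (∀ i, 0 < f γ i) ∧
      (∀ x : ℝ, (x • (1 : Matrix (Fin n ⊕ Fin n) (Fin n ⊕ Fin n) ℝ)
          + symplJ n * γ * (symplJ n * γ)).det = (∏ k, (x - f γ k ^ 2)) ^ 2) ∧
      (symplJ n * γ * (symplJ n * γ)).trace = -2 * ∑ k, f γ k ^ 2 := by
    intro γ h1 h2
    have hpd := covariance_posdef h1 h2
    obtain ⟨S, hS, hpos, -, hSD⟩ := hf γ hpd
    exact ⟨hpos, fun x => det_identity hS hSD x, trace_identity hS hSD⟩
  intro γ₀ hγ₀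
  obtain ⟨hd₀pos, hdet₀, htr₀⟩ := hfacts γ₀ hγ₀.1 hγ₀.2
  haveI : FirstCountableTopology (Matrix (Fin n ⊕ Fin n) (Fin n ⊕ Fin n) ℝ) :=
    inferInstanceAs (FirstCountableTopology ((Fin n ⊕ Fin n) → (Fin n ⊕ Fin n) → ℝ))
  have hcontM : Continuous fun γ : Matrix (Fin n ⊕ Fin n) (Fin n ⊕ Fin n) ℝ =>
      symplJ n * γ * (symplJ n * γ) :=
    (continuous_const.matrix_mul continuous_id).matrix_mul
      (continuous_const.matrix_mul continuous_id)
  have hcontTr : Continuous fun γ : Matrix (Fin n ⊕ Fin n) (Fin n ⊕ Fin n) ℝ =>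
      (symplJ n * γ * (symplJ n * γ)).trace := hcontM.matrix_trace
  have hconth : Continuous fun y : ℝ => entg ((y + 1) / 2) - entg ((y - 1) / 2) := by
    have hg : Continuous entg := Real.continuous_mul_log
    exact (hg.comp (by continuity)).sub (hg.comp (by continuity))
  have hcontSum : Continuous fun dv : Fin n → ℝ =>
      ∑ k, (entg ((dv k + 1) / 2) - entg ((dv k - 1) / 2)) :=
    continuous_finset_sum _ fun k _ => hconth.comp (continuous_apply k)
  rw [ContinuousWithinAt]
  apply Filter.tendsto_of_subseq_tendsto
  intro ns hns
  have hns' : Filter.Tendsto ns Filter.atTop (nhds γ₀) := hns.mono_right nhdsWithin_le_nhds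
  set T₀ : ℝ := |(symplJ n * γ₀ * (symplJ n * γ₀)).trace| with hT₀
  set B : ℝ := (T₀ + 2) / 2 with hB
  have hmem : ∀ᶠ m in Filter.atTop, ns m ∈
      {γ : Matrix (Fin n ⊕ Fin n) (Fin n ⊕ Fin n) ℝ | γ.IsSymm ∧
        (γ.map (Complex.ofReal ·) -
          Complex.I • (symplJ n).map (Complex.ofReal ·)).PosSemidef} :=
    hns.eventually_mem self_mem_nhdsWithin
  have habs : Filter.Tendsto
      (fun m => |(symplJ n * ns m * (symplJ n * ns m)).trace|) Filter.atTop (nhds T₀) :=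
    ((continuous_abs.comp hcontTr).tendsto γ₀).comp hns'
  have hboundev : ∀ᶠ m in Filter.atTop,
      |(symplJ n * ns m * (symplJ n * ns m)).trace| ≤ T₀ + 2 :=
    habs.eventually (eventually_le_nhds (by linarith))
  obtain ⟨N, hN⟩ := Filter.eventually_atTop.mp (hmem.and hboundev)
  have hmemN : ∀ m : ℕ, (ns (m + N)).IsSymm ∧
      ((ns (m + N)).map (Complex.ofReal ·) -
        Complex.I • (symplJ n).map (Complex.ofReal ·)).PosSemidef :=
    fun m => (hN (m + N) (Nat.le_add_left N m)).1
  have hball : ∀ m : ℕ, f (ns (m + N)) ∈ Metric.closedBall (0 : Fin n → ℝ) (Real.sqrt B) := by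
    intro m
    obtain ⟨hposm, -, htrm⟩ := hfacts _ (hmemN m).1 (hmemN m).2
    have htrb := (hN (m + N) (Nat.le_add_left N m)).2
    have hsum : ∑ k, f (ns (m + N)) k ^ 2 ≤ B := by
      have h2 := neg_abs_le ((symplJ n * ns (m + N) * (symplJ n * ns (m + N))).trace)
      rw [htrm] at h2 htrb
      rw [hB]
      rw [abs_le] at htrb
      linarith [htrb.1]
    rw [Metric.mem_closedBall, dist_zero_right,
      pi_norm_le_iff_of_nonneg (Real.sqrt_nonneg _)]
    intro k
    rw [Real.norm_eq_abs, ← Real.sqrt_sq_eq_abs]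
    apply Real.sqrt_le_sqrt
    calc f (ns (m + N)) k ^ 2
        ≤ ∑ j, f (ns (m + N)) j ^ 2 :=
          Finset.single_le_sum (f := fun j => f (ns (m + N)) j ^ 2) (fun j _ => sq_nonneg _) (Finset.mem_univ k)
      _ ≤ B := hsum
  obtain ⟨e, -, φ, hφ, he⟩ :=
    tendsto_subseq_of_bounded Metric.isBounded_closedBall hball
  have hidx : Filter.Tendsto (fun m => φ m + N) Filter.atTop Filter.atTop :=
    Filter.tendsto_atTop_mono (fun m => Nat.le_add_right (φ m) N |>.trans' (hφ.le_apply))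
      Filter.tendsto_id
  have hnsSub : Filter.Tendsto (fun m => ns (φ m + N)) Filter.atTop (nhds γ₀) :=
    hns'.comp hidx
  have he_k : ∀ k, Filter.Tendsto (fun m => f (ns (φ m + N)) k) Filter.atTop (nhds (e k)) :=
    fun k => ((continuous_apply k).tendsto e).comp he
  have he_nonneg : ∀ k, 0 ≤ e k := fun k =>
    ge_of_tendsto (he_k k)
      (Filter.Eventually.of_forall fun m =>
        ((hfacts _ (hmemN (φ m)).1 (hmemN (φ m)).2).1 k).le)
  have hdet_eq : ∀ x : ℝ, (∏ k, (x - e k ^ 2)) ^ 2 = (∏ k, (x - f γ₀ k ^ 2)) ^ 2 := by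
    intro x
    have hcontA : Continuous fun γ : Matrix (Fin n ⊕ Fin n) (Fin n ⊕ Fin n) ℝ =>
        (x • (1 : Matrix (Fin n ⊕ Fin n) (Fin n ⊕ Fin n) ℝ)
          + symplJ n * γ * (symplJ n * γ)).det :=
      (continuous_const.add hcontM).matrix_det
    have t1 : Filter.Tendsto
        (fun m => (x • (1 : Matrix (Fin n ⊕ Fin n) (Fin n ⊕ Fin n) ℝ)
          + symplJ n * ns (φ m + N) * (symplJ n * ns (φ m + N))).det)
        Filter.atTop
        (nhds ((x • (1 : Matrix (Fin n ⊕ Fin n) (Fin n ⊕ Fin n) ℝ)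
          + symplJ n * γ₀ * (symplJ n * γ₀)).det)) :=
      (hcontA.tendsto γ₀).comp hnsSub
    have t1' : Filter.Tendsto
        (fun m => (∏ k, (x - f (ns (φ m + N)) k ^ 2)) ^ 2) Filter.atTop
        (nhds ((∏ k, (x - f γ₀ k ^ 2)) ^ 2)) := by
      rw [← hdet₀ x]
      exact t1.congr fun m =>
        (hfacts _ (hmemN (φ m)).1 (hmemN (φ m)).2).2.1 x
    have hcontP : Continuous fun dv : Fin n → ℝ => (∏ k, (x - dv k ^ 2)) ^ 2 :=
      (continuous_finset_prod _ fun k _ =>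
        continuous_const.sub ((continuous_apply k).pow 2)).pow 2
    have t2 : Filter.Tendsto
        (fun m => (∏ k, (x - f (ns (φ m + N)) k ^ 2)) ^ 2) Filter.atTop
        (nhds ((∏ k, (x - e k ^ 2)) ^ 2)) :=
      (hcontP.tendsto e).comp he
    exact tendsto_nhds_unique t2 t1'
  have hsum_eq :=
    sum_transfer e (f γ₀) he_nonneg (fun k => (hd₀pos k).le) hdet_eq
      (fun y => entg ((y + 1) / 2) - entg ((y - 1) / 2))
  refine ⟨fun m => φ m + N, ?_⟩
  have hfinal : Filter.Tendsto
      (fun m => ∑ k, (entg ((f (ns (φ m + N)) k + 1) / 2)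
        - entg ((f (ns (φ m + N)) k - 1) / 2))) Filter.atTop
      (nhds (∑ k, (entg ((e k + 1) / 2) - entg ((e k - 1) / 2)))) :=
    (hcontSum.tendsto e).comp he
  rw [hsum_eq] at hfinal
  exact hfinal
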